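/- Relative bound for quaternionic equiangular lines: let v_1, …, v_n ∈ ℍ^d, n ≥ 2, be unit vectors that are equiangular, i.e., |⟨v_j, v_k⟩|² = λ for all j ≠ k. Then λ ≥ (n − d)/(d(n − 1)), with equality if and only if V·Vᴴ = (n/d)·I_d (the vectors form a tight frame); consequently, if λ < 1/d then n ≤ (1 − λ)/(1/d − λ). -/

import Mathlib

open Quaternion Matrix BigOperators

/-- Euclidean inner product on `ℍ^d`: `⟨v,w⟩ = ∑ i, conj (w i) * v i`
(linear in the first variable). -/
noncomputable def qip {d : ℕ} (v w : Fin d → ℍ[ℝ]) : ℍ[ℝ] :=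
  ∑ i, star (w i) * v i

/-- Squared Euclidean norm on `ℍ^d`, a nonnegative real. -/
noncomputable def nsq {d : ℕ} (v : Fin d → ℍ[ℝ]) : ℝ :=
  ∑ i, Quaternion.normSq (v i)

private lemma re_mul_comm' (a b : ℍ[ℝ]) : (a * b).re = (b * a).re := by
  simp only [Quaternion.re_mul]; ring

private def reHom : ℍ[ℝ] →+ ℝ where
  toFun := QuaternionAlgebra.re
  map_zero' := rfl
  map_add' := fun _ _ => rfl

private lemma re_sum {α : Type*} (s : Finset α) (f : α → ℍ[ℝ]) :
    (∑ i ∈ s, f i).re = ∑ i ∈ s, (f i).re := map_sum reHom f s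

private lemma coe_sum' {α : Type*} (s : Finset α) (f : α → ℝ) :
    ((∑ i ∈ s, f i : ℝ) : ℍ[ℝ]) = ∑ i ∈ s, ((f i : ℝ) : ℍ[ℝ]) := by
  rw [← Quaternion.algebraMap_def]; exact map_sum _ f s

private lemma re_four (a b c e : ℍ[ℝ]) :
    ((star e * a) * (star b * c)).re = ((a * star b) * (c * star e)).re := by
  rw [mul_assoc, re_mul_comm']
  simp [mul_assoc]

private lemma sum4_rev {A B C D : Type*} [Fintype A] [Fintype B] [Fintype C] [Fintype D]
    (f : A → B → C → D → ℝ) :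
    ∑ a, ∑ b, ∑ c, ∑ e, f a b c e = ∑ e, ∑ c, ∑ b, ∑ a, f a b c e := by
  calc ∑ a, ∑ b, ∑ c, ∑ e, f a b c e
      = ∑ a, ∑ b, ∑ e, ∑ c, f a b c e :=
        Finset.sum_congr rfl fun a _ => Finset.sum_congr rfl fun b _ => Finset.sum_comm
    _ = ∑ a, ∑ e, ∑ b, ∑ c, f a b c e :=
        Finset.sum_congr rfl fun a _ => Finset.sum_comm
    _ = ∑ e, ∑ a, ∑ b, ∑ c, f a b c e := Finset.sum_comm
    _ = ∑ e, ∑ a, ∑ c, ∑ b, f a b c e :=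
        Finset.sum_congr rfl fun e _ => Finset.sum_congr rfl fun a _ => Finset.sum_comm
    _ = ∑ e, ∑ c, ∑ a, ∑ b, f a b c e :=
        Finset.sum_congr rfl fun e _ => Finset.sum_comm
    _ = ∑ e, ∑ c, ∑ b, ∑ a, f a b c e :=
        Finset.sum_congr rfl fun e _ => Finset.sum_congr rfl fun c _ => Finset.sum_comm

set_option maxHeartbeats 1000000 in
private lemma sum_normSq_gram {d n : ℕ} (v : Fin n → Fin d → ℍ[ℝ]) :
    ∑ j, ∑ k, Quaternion.normSq (qip (v j) (v k)) =
    ∑ i, ∑ k, Quaternion.normSq (∑ j, v j i * star (v j k)) := by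
  have hns : ∀ q : ℍ[ℝ], Quaternion.normSq q = (q * star q).re :=
    fun q => Quaternion.normSq_def q
  simp only [hns, qip, star_sum, StarMul.star_mul, star_star, Finset.sum_mul, Finset.mul_sum,
    re_sum]
  calc
    ∑ j, ∑ k, ∑ i', ∑ i, (star (v k i) * v j i * (star (v j i') * v k i')).re
      = ∑ j, ∑ k, ∑ i', ∑ i, ((v j i * star (v j i')) * (v k i' * star (v k i))).re := by
        refine Finset.sum_congr rfl fun j _ => Finset.sum_congr rfl fun k _ =>
          Finset.sum_congr rfl fun i' _ => Finset.sum_congr rfl fun i _ => ?_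
        exact re_four (v j i) (v j i') (v k i') (v k i)
    _ = ∑ i, ∑ i', ∑ k, ∑ j, ((v j i * star (v j i')) * (v k i' * star (v k i))).re :=
        sum4_rev _
    _ = ∑ i, ∑ k, ∑ j', ∑ j, (v j i * star (v j k) * (v j' k * star (v j' i))).re := rfl

set_option maxHeartbeats 1600000 in
/-- Relative bound for quaternionic equiangular lines: for `n ≥ 2` equiangular unit
vectors in `ℍ^d` with common angle `λ`, one has `λ ≥ (n−d)/(d(n−1))`, with
equality iff `V Vᴴ = (n/d) I_d` (the vectors form a tight frame); consequently,
if `λ < 1/d` then `n ≤ (1−λ)/(1/d−λ)`. -/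
theorem relative_bound_equiangular_lines (d n : ℕ) (hn : 2 ≤ n) (lam : ℝ)
    (v : Fin n → (Fin d → ℍ[ℝ]))
    (hunit : ∀ j, nsq (v j) = 1)
    (hequi : ∀ j k, j ≠ k → Quaternion.normSq (qip (v j) (v k)) = lam) :
    lam ≥ ((n : ℝ) - d) / (d * ((n : ℝ) - 1)) ∧
    (lam = ((n : ℝ) - d) / (d * ((n : ℝ) - 1)) ↔
      (Matrix.of fun i j => v j i) * (Matrix.of fun i j => v j i)ᴴ =
        ((n : ℝ) / (d : ℝ)) • (1 : Matrix (Fin d) (Fin d) ℍ[ℝ])) ∧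
    (lam < 1 / (d : ℝ) → (n : ℝ) ≤ (1 - lam) / (1 / (d : ℝ) - lam)) := by
  have hd1 : 1 ≤ d := by
    by_contra h
    push_neg at h
    interval_cases d
    have h0 := hunit ⟨0, by omega⟩
    simp [nsq] at h0
  have hdR : (1:ℝ) ≤ (d:ℝ) := by exact_mod_cast hd1
  have hnR : (2:ℝ) ≤ (n:ℝ) := by exact_mod_cast hn
  have hd0 : (0:ℝ) < (d:ℝ) := by linarith
  have hn1 : (0:ℝ) < (n:ℝ) - 1 := by linarith
  have hnpos : (0:ℝ) < (n:ℝ) := by linarith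
  have hdn : (0:ℝ) < (d:ℝ) * ((n:ℝ) - 1) := mul_pos hd0 hn1
  set M : Matrix (Fin d) (Fin n) ℍ[ℝ] := Matrix.of fun i j => v j i with hM
  have hT : ∀ i k, (M * Mᴴ) i k = ∑ j, v j i * star (v j k) := by
    intro i k
    simp [Matrix.mul_apply, Matrix.conjTranspose_apply, hM]
  set r : Fin d → ℝ := fun i => ∑ j, Quaternion.normSq (v j i) with hr
  have hTdiag : ∀ i, (M * Mᴴ) i i = ((r i : ℝ) : ℍ[ℝ]) := by
    intro i
    rw [hT, hr, coe_sum']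
    exact Finset.sum_congr rfl fun j _ => Quaternion.self_mul_star _
  have hrsum : ∑ i, r i = (n:ℝ) := by
    rw [hr]
    calc ∑ i, ∑ j, Quaternion.normSq (v j i)
        = ∑ j, ∑ i, Quaternion.normSq (v j i) := Finset.sum_comm
      _ = ∑ _j : Fin n, (1:ℝ) := Finset.sum_congr rfl fun j _ => hunit j
      _ = (n:ℝ) := by simp
  -- frame potential identity
  have hF1 : ∑ i, ∑ k, Quaternion.normSq ((M * Mᴴ) i k)
      = (n:ℝ) + (n:ℝ) * ((n:ℝ) - 1) * lam := by
    calc ∑ i, ∑ k, Quaternion.normSq ((M * Mᴴ) i k)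
        = ∑ i, ∑ k, Quaternion.normSq (∑ j, v j i * star (v j k)) := by
          exact Finset.sum_congr rfl fun i _ => Finset.sum_congr rfl fun k _ => by rw [hT]
      _ = ∑ j, ∑ k, Quaternion.normSq (qip (v j) (v k)) := (sum_normSq_gram v).symm
      _ = ∑ _j : Fin n, (1 + ((n:ℝ) - 1) * lam) := by
          refine Finset.sum_congr rfl fun j _ => ?_
          rw [← Finset.add_sum_erase _ _ (Finset.mem_univ j)]
          congr 1
          · have h1 : qip (v j) (v j) = ((1:ℝ) : ℍ[ℝ]) := by
              rw [qip]
              calc ∑ i, star (v j i) * v j i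
                  = ∑ i, ((Quaternion.normSq (v j i) : ℝ) : ℍ[ℝ]) :=
                    Finset.sum_congr rfl fun i _ => Quaternion.star_mul_self _
                _ = ((nsq (v j) : ℝ) : ℍ[ℝ]) := (coe_sum' _ _).symm
                _ = ((1:ℝ) : ℍ[ℝ]) := by rw [hunit j]
            rw [h1]
            simp
          · rw [Finset.sum_congr rfl
              (fun k hk => hequi j k (Finset.ne_of_mem_erase hk).symm)]
            rw [Finset.sum_const, Finset.card_erase_of_mem (Finset.mem_univ j),
              Finset.card_univ, Fintype.card_fin, nsmul_eq_mul,
              Nat.cast_sub (by omega : 1 ≤ n), Nat.cast_one]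
      _ = (n:ℝ) + (n:ℝ) * ((n:ℝ) - 1) * lam := by
          rw [Finset.sum_const]
          simp only [Finset.card_univ, Fintype.card_fin, smul_eq_mul]
          ring
  -- split into off-diagonal and diagonal parts
  set A : ℝ := ∑ i, ∑ k ∈ Finset.univ.erase i, Quaternion.normSq ((M * Mᴴ) i k) with hA
  set C : ℝ := ∑ i, (r i - (n:ℝ)/(d:ℝ))^2 with hC
  have hF2 : ∑ i, ∑ k, Quaternion.normSq ((M * Mᴴ) i k) = A + ∑ i, (r i)^2 := by
    rw [hA, ← Finset.sum_add_distrib]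
    refine Finset.sum_congr rfl fun i _ => ?_
    rw [← Finset.add_sum_erase _ _ (Finset.mem_univ i), hTdiag i, Quaternion.normSq_coe]
    ring
  have hCexp : C = (∑ i, (r i)^2) - (n:ℝ)^2/(d:ℝ) := by
    rw [hC]
    rw [Finset.sum_congr rfl (fun i _ => show (r i - (n:ℝ)/(d:ℝ))^2
      = (r i)^2 - 2*((n:ℝ)/(d:ℝ))*(r i) + ((n:ℝ)/(d:ℝ))^2 from by ring)]
    rw [Finset.sum_add_distrib, Finset.sum_sub_distrib, ← Finset.mul_sum, Finset.sum_const,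
      nsmul_eq_mul, hrsum]
    simp only [Finset.card_univ, Fintype.card_fin]
    field_simp
    ring
  -- the master identity
  have hmain : (n:ℝ) + (n:ℝ) * ((n:ℝ) - 1) * lam = (n:ℝ)^2/(d:ℝ) + (A + C) := by
    rw [← hF1, hF2]
    have : ∑ i, (r i)^2 = (n:ℝ)^2/(d:ℝ) + C := by linarith [hCexp]
    rw [this]; ring
  have hAnn : 0 ≤ A := by
    rw [hA]
    exact Finset.sum_nonneg fun i _ => Finset.sum_nonneg fun k _ => Quaternion.normSq_nonneg
  have hCnn : 0 ≤ C := by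
    rw [hC]
    exact Finset.sum_nonneg fun i _ => sq_nonneg _
  have hAC : (n:ℝ) * (lam * ((d:ℝ)*((n:ℝ)-1)) - ((n:ℝ)-(d:ℝ))) = (d:ℝ)*(A+C) := by
    have hmain' : (d:ℝ)*(n:ℝ) + (d:ℝ)*((n:ℝ)*((n:ℝ)-1)*lam) = (n:ℝ)^2 + (d:ℝ)*(A+C) := by
      have h := hmain
      field_simp at h
      linear_combination h
    nlinarith [hmain']
  -- Part 1
  have part1 : lam ≥ ((n : ℝ) - d) / (d * ((n : ℝ) - 1)) := by
    rw [ge_iff_le, div_le_iff₀ hdn]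
    have h0 : 0 ≤ (n:ℝ) * (lam * ((d:ℝ)*((n:ℝ)-1)) - ((n:ℝ)-(d:ℝ))) := by
      rw [hAC]; positivity
    nlinarith [h0, hnpos]
  refine ⟨part1, ?_, ?_⟩
  · -- Part 2 : equality iff tight frame
    have hiff1 : lam = ((n : ℝ) - d) / (d * ((n : ℝ) - 1)) ↔ A + C = 0 := by
      rw [eq_div_iff (ne_of_gt hdn)]
      constructor
      · intro h
        have : (n:ℝ) * (lam * ((d:ℝ)*((n:ℝ)-1)) - ((n:ℝ)-(d:ℝ))) = 0 := by rw [h]; ring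
        rw [hAC] at this
        nlinarith [this, hd0]
      · intro h
        rw [h, mul_zero] at hAC
        have : lam * ((d:ℝ)*((n:ℝ)-1)) - ((n:ℝ)-(d:ℝ)) = 0 := by
          rcases mul_eq_zero.mp hAC with h' | h'
          · exact absurd h' (ne_of_gt hnpos)
          · exact h'
        linarith [this]
    rw [hiff1]
    constructor
    · intro h
      have hA0 : A = 0 := by linarith
      have hC0 : C = 0 := by linarith
      have hAz : ∀ i, ∀ k ∈ Finset.univ.erase i, Quaternion.normSq ((M * Mᴴ) i k) = 0 := by
        intro i k hk
        have h2 := (Finset.sum_eq_zero_iff_of_nonneg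
          (fun i _ => Finset.sum_nonneg (fun k _ => Quaternion.normSq_nonneg))).mp
          (show ∑ i, ∑ k ∈ Finset.univ.erase i, Quaternion.normSq ((M * Mᴴ) i k) = 0 by rw [← hA]; exact hA0) i (Finset.mem_univ i)
        exact (Finset.sum_eq_zero_iff_of_nonneg
          (fun k _ => Quaternion.normSq_nonneg)).mp h2 k hk
      have hCz : ∀ i, r i = (n:ℝ)/(d:ℝ) := by
        intro i
        have h2 := (Finset.sum_eq_zero_iff_of_nonneg
          (fun i _ => sq_nonneg _)).mp (by rw [← hC]; exact hC0) i (Finset.mem_univ i)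
        have := pow_eq_zero_iff (n := 2) (by norm_num) |>.mp h2
        linarith [this]
      refine Matrix.ext fun i k => ?_
      by_cases hik : i = k
      · subst hik
        rw [hTdiag i, hCz i]
        simp only [Matrix.smul_apply, Matrix.one_apply_eq]
        rw [Algebra.smul_def, Quaternion.algebraMap_def, mul_one]
      · have hz : (M * Mᴴ) i k = 0 :=
          Quaternion.normSq_eq_zero.mp (hAz i k (Finset.mem_erase.mpr ⟨Ne.symm hik, Finset.mem_univ k⟩))
        rw [hz]
        simp [Matrix.one_apply_ne hik]
    · intro hTeq
      have hA0 : A = 0 := by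
        rw [hA]
        refine Finset.sum_eq_zero fun i _ => Finset.sum_eq_zero fun k hk => ?_
        have hik : i ≠ k := fun h => (Finset.ne_of_mem_erase hk) h.symm
        have : (M * Mᴴ) i k = 0 := by
          rw [hTeq]
          simp [Matrix.one_apply_ne hik]
        rw [this]
        simp [Quaternion.normSq]
      have hC0 : C = 0 := by
        rw [hC]
        refine Finset.sum_eq_zero fun i _ => ?_
        have h1 : ((r i : ℝ) : ℍ[ℝ]) = (((n:ℝ)/(d:ℝ) : ℝ) : ℍ[ℝ]) := by
          rw [← hTdiag i, hTeq]
          simp only [Matrix.smul_apply, Matrix.one_apply_eq]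
          rw [Algebra.smul_def, Quaternion.algebraMap_def, mul_one]
        have h2 : r i = (n:ℝ)/(d:ℝ) := Quaternion.coe_injective h1
        rw [h2]; ring
      linarith
  · -- Part 3
    intro hlt
    have hpos : 0 < 1/(d:ℝ) - lam := by linarith
    rw [le_div_iff₀ hpos]
    have h1 : ((n:ℝ) - d) / (d * ((n:ℝ) - 1)) ≤ lam := part1
    rw [div_le_iff₀ hdn] at h1
    have hd' : (d:ℝ) * (1/(d:ℝ)) = 1 := by field_simp
    nlinarith [h1, hd', hd0, hnpos]
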